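/- If {F^k} is the pullback attractor of a non-autonomous iterated function system of similarities satisfying the generalised Moran open-set condition, if σ_i = c_k for all i ∈ I_k and all k ∈ ℕ, and if inf{σ_i : i ∈ ℕ} = σ* > 0, then each set F^k is equi-homogeneous. -/

import Mathlib

open Set Metric Filter Bornology MeasureTheory
open scoped ENNReal NNReal

/-- A non-autonomous iterated function system: contractions `f i` with ratios
`σ i ∈ (0,1)` and finite nonempty index sets `I k ⊆ ℕ` for `k ≥ 1`. -/
structure NAIFS (E : Type*) [MetricSpace E] where
  f : ℕ → E → E
  σ : ℕ → ℝ
  σ_pos : ∀ i, 0 < σ i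
  σ_lt_one : ∀ i, σ i < 1
  contract : ∀ i x y, dist (f i x) (f i y) ≤ σ i * dist x y
  I : ℕ → Finset ℕ
  I_nonempty : ∀ k, 1 ≤ k → (I k).Nonempty

variable {E : Type*} [MetricSpace E]

/-- `S^k(B) = ⋃_{i ∈ I_{k+1}} f_i(B)`. -/
def Sstep (sys : NAIFS E) (k : ℕ) (B : Set E) : Set E :=
  ⋃ i ∈ sys.I (k + 1), sys.f i '' B

/-- `SiterN sys k n B = S^{k, k+n}(B) = S^k ∘ ⋯ ∘ S^{k+n-1} (B)`. -/
def SiterN (sys : NAIFS E) : ℕ → ℕ → Set E → Set E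
  | _, 0, B => B
  | k, n + 1, B => Sstep sys k (SiterN sys (k + 1) n B)

/-- Hausdorff semi-distance `ρ_H(A,B) = sup_{x ∈ A} inf_{y ∈ B} d(x,y)`. -/
noncomputable def semidist (A B : Set E) : ℝ≥0∞ :=
  ⨆ x ∈ A, EMetric.infEdist x B

/-- `{F^k}` is a pullback attractor: each `F^k` compact, uniformly bounded,
invariant `F^k = S^k(F^{k+1})`, and `ρ_H(S^{k,l}(B), F^k) → 0` as `l → ∞`
for every bounded `B`. -/
def IsPullbackAttractor (sys : NAIFS E) (F : ℕ → Set E) : Prop :=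
  (∀ k, IsCompact (F k)) ∧
  IsBounded (⋃ k, F k) ∧
  (∀ k, F k = Sstep sys k (F (k + 1))) ∧
  (∀ B : Set E, IsBounded B → ∀ k,
    Tendsto (fun l => semidist (SiterN sys k (l - k) B) (F k)) atTop (nhds 0))

/-- The generalised Moran open-set condition: uniformly bounded nonempty open
sets `U^k` with `S^k(U^{k+1}) ⊆ U^k`, `f_i(U^k) ∩ f_j(U^k) = ∅` for distinct
`i, j ∈ I_k`, and `λ(U^k) ≥ ε₀ > 0`. -/
def GenMoranOSC {d : ℕ} (sys : NAIFS (EuclideanSpace ℝ (Fin d)))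
    (U : ℕ → Set (EuclideanSpace ℝ (Fin d))) (ε₀ : ℝ) : Prop :=
  (∀ k, (U k).Nonempty) ∧
  (∀ k, IsOpen (U k)) ∧
  IsBounded (⋃ k, U k) ∧
  (∀ k, Sstep sys k (U (k + 1)) ⊆ U k) ∧
  (∀ k, 1 ≤ k → ∀ i ∈ sys.I k, ∀ j ∈ sys.I k, i ≠ j →
    sys.f i '' U k ∩ sys.f j '' U k = ∅) ∧
  0 < ε₀ ∧
  (∀ k, ENNReal.ofReal ε₀ ≤ volume (U k))

/-- `coverNumber F δ` : the minimum number of closed `δ`-balls with centres in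
`F` needed to cover `F` (`∞` if there is no finite such cover). -/
noncomputable def coverNumber {X : Type*} [MetricSpace X] (F : Set X) (δ : ℝ) : ℝ≥0∞ :=
  ⨅ (t : Finset X) (_ : (t : Set X) ⊆ F) (_ : F ⊆ ⋃ x ∈ t, closedBall x δ),
    (t.card : ℝ≥0∞)

/-- `F` is equi-homogeneous: for every `δ₀ > 0` there are `M ≥ 1` and
`c₁, c₂ > 0` with
`sup_{x∈F} N(B_δ(x) ∩ F, ρ) ≤ M inf_{x∈F} N(B_{c₁δ}(x) ∩ F, c₂ρ)`
for all `0 < ρ < δ ≤ δ₀`. -/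
def EquiHomogeneous {X : Type*} [MetricSpace X] (F : Set X) : Prop :=
  ∀ δ₀ : ℝ, 0 < δ₀ → ∃ M c₁ c₂ : ℝ, 1 ≤ M ∧ 0 < c₁ ∧ 0 < c₂ ∧
    ∀ δ ρ : ℝ, 0 < ρ → ρ < δ → δ ≤ δ₀ →
      (⨆ x ∈ F, coverNumber (closedBall x δ ∩ F) ρ) ≤
        ENNReal.ofReal M * (⨅ x ∈ F, coverNumber (closedBall x (c₁ * δ) ∩ F) (c₂ * ρ))


section EquiAux


noncomputable def extN {X : Type*} [MetricSpace X] (A : Set X) (ρ : ℝ) : ℝ≥0∞ :=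
  ⨅ (t : Finset X) (_ : A ⊆ ⋃ x ∈ t, closedBall x ρ), (t.card : ℝ≥0∞)

variable {X : Type*} [MetricSpace X]

lemma extN_le_of_cover {A : Set X} {ρ : ℝ} {t : Finset X}
    (h : A ⊆ ⋃ x ∈ t, closedBall x ρ) : extN A ρ ≤ t.card :=
  iInf₂_le t h

lemma extN_empty (ρ : ℝ) : extN (∅ : Set X) ρ = 0 :=
  le_antisymm (by simpa using extN_le_of_cover (t := (∅ : Finset X)) (by simp)) (zero_le)

lemma extN_mono {A B : Set X} {ρ : ℝ} (h : A ⊆ B) : extN A ρ ≤ extN B ρ :=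
  le_iInf₂ fun _t ht => extN_le_of_cover (h.trans ht)

lemma extN_anti {A : Set X} {ρ ρ' : ℝ} (h : ρ ≤ ρ') : extN A ρ' ≤ extN A ρ :=
  le_iInf₂ fun _t ht => extN_le_of_cover
    (ht.trans (Set.iUnion₂_mono fun _x _ => closedBall_subset_closedBall h))

lemma exists_extN_cover {A : Set X} {ρ : ℝ} (h : extN A ρ ≠ ⊤) :
    ∃ t : Finset X, (A ⊆ ⋃ x ∈ t, closedBall x ρ) ∧ (t.card : ℝ≥0∞) ≤ extN A ρ := by
  classical
  have hex : ∃ n : ℕ, ∃ t : Finset X, (A ⊆ ⋃ x ∈ t, closedBall x ρ) ∧ t.card = n := by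
    by_contra hno
    push_neg at hno
    apply h
    rw [extN, eq_top_iff]
    refine le_iInf fun t => le_iInf fun ht => ?_
    exact absurd rfl (hno t.card t ht)
  obtain ⟨t, ht, hcard⟩ := Nat.find_spec hex
  refine ⟨t, ht, ?_⟩
  refine le_iInf₂ fun t' ht' => ?_
  have : Nat.find hex ≤ t'.card := Nat.find_min' hex ⟨t', ht', rfl⟩
  exact_mod_cast hcard ▸ this

lemma extN_biUnion_le {ι : Type*} {P : Finset ι} {A : ι → Set X} {ρ : ℝ} {C : ℝ≥0∞}
    (h : ∀ w ∈ P, extN (A w) ρ ≤ C) :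
    extN (⋃ w ∈ P, A w) ρ ≤ P.card * C := by
  classical
  by_cases hC : C = ⊤
  · rcases P.eq_empty_or_nonempty with rfl | hP
    · simp [extN_empty]
    · have hcard : (P.card : ℝ≥0∞) ≠ 0 := by
        exact_mod_cast hP.card_pos.ne'
      rw [hC, ENNReal.mul_top hcard]
      exact le_top
  · have h' : ∀ w ∈ P, ∃ t : Finset X, (A w ⊆ ⋃ x ∈ t, closedBall x ρ) ∧
        (t.card : ℝ≥0∞) ≤ C := by
      intro w hw
      obtain ⟨t, ht, hle⟩ := exists_extN_cover (A := A w) (ρ := ρ)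
        (fun htop => hC (top_le_iff.1 (htop ▸ h w hw)))
      exact ⟨t, ht, hle.trans (h w hw)⟩
    choose T hT1 hT2 using h'
    refine le_trans (extN_le_of_cover
      (t := P.attach.biUnion fun w => T w.1 w.2) ?_) ?_
    · intro a ha
      simp only [Set.mem_iUnion] at ha
      obtain ⟨w, hw, haw⟩ := ha
      obtain ⟨x, hx, hax⟩ := Set.mem_iUnion₂.1 (hT1 w hw haw)
      exact Set.mem_iUnion₂.2 ⟨x, Finset.mem_biUnion.2 ⟨⟨w, hw⟩, Finset.mem_attach _ _, hx⟩, hax⟩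
    · calc ((P.attach.biUnion fun w => T w.1 w.2).card : ℝ≥0∞)
          ≤ (∑ w ∈ P.attach, (T w.1 w.2).card : ℕ) := by
            exact_mod_cast Finset.card_biUnion_le
        _ = ∑ w ∈ P.attach, ((T w.1 w.2).card : ℝ≥0∞) := by push_cast; rfl
        _ ≤ ∑ _w ∈ P.attach, C := Finset.sum_le_sum fun w _ => hT2 w.1 w.2
        _ = P.card * C := by rw [Finset.sum_const, Finset.card_attach, nsmul_eq_mul]

lemma extN_image_le {g : X → X} {r : ℝ} (hr : 0 ≤ r)
    (hg : ∀ x y, dist (g x) (g y) = r * dist x y) (A : Set X) (s : ℝ) :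
    extN (g '' A) (r * s) ≤ extN A s := by
  classical
  refine le_iInf₂ fun t ht => ?_
  refine le_trans (extN_le_of_cover (t := t.image g) ?_) ?_
  · rintro _ ⟨a, ha, rfl⟩
    obtain ⟨x, hx, hax⟩ := Set.mem_iUnion₂.1 (ht ha)
    refine Set.mem_iUnion₂.2 ⟨g x, Finset.mem_image_of_mem g hx, ?_⟩
    rw [mem_closedBall] at hax ⊢
    rw [hg]
    exact mul_le_mul_of_nonneg_left hax hr
  · exact_mod_cast Finset.card_image_le

lemma le_extN_image {g : X → X} {r : ℝ} (hr : 0 < r)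
    (hg : ∀ x y, dist (g x) (g y) = r * dist x y) (A : Set X) (s : ℝ) :
    extN A (2 * s / r) ≤ extN (g '' A) s := by
  classical
  rcases A.eq_empty_or_nonempty with rfl | ⟨a₀, ha₀⟩
  · simp [extN_empty]
  refine le_iInf₂ fun t ht => ?_
  set pick : X → X := fun x =>
    if h : (A ∩ g ⁻¹' (closedBall x s)).Nonempty then h.choose else a₀ with hpick
  refine le_trans (extN_le_of_cover (t := t.image pick) ?_) ?_
  · intro a ha
    obtain ⟨x, hx, hax⟩ := Set.mem_iUnion₂.1 (ht ⟨a, ha, rfl⟩)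
    have hne : (A ∩ g ⁻¹' (closedBall x s)).Nonempty := ⟨a, ha, hax⟩
    have hb : pick x ∈ A ∩ g ⁻¹' (closedBall x s) := by
      rw [hpick]; simp only [dif_pos hne]; exact hne.choose_spec
    refine Set.mem_iUnion₂.2 ⟨pick x, Finset.mem_image_of_mem pick hx, ?_⟩
    rw [mem_closedBall]
    have h1 : dist (g a) (g (pick x)) ≤ 2 * s := by
      calc dist (g a) (g (pick x)) ≤ dist (g a) x + dist (g (pick x)) x :=
            dist_triangle_right _ _ _
        _ ≤ s + s := add_le_add hax hb.2
        _ = 2 * s := by ring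
    rw [hg] at h1
    rw [le_div_iff₀ hr, mul_comm]
    exact h1
  · exact_mod_cast Finset.card_image_le

lemma coverNumber_le_of_cover {A : Set X} {ρ : ℝ} {t : Finset X}
    (h1 : (t : Set X) ⊆ A) (h2 : A ⊆ ⋃ x ∈ t, closedBall x ρ) :
    coverNumber A ρ ≤ t.card :=
  iInf_le_of_le t (iInf_le_of_le h1 (iInf_le _ h2))

lemma one_le_coverNumber {A : Set X} {ρ : ℝ} (h : A.Nonempty) : 1 ≤ coverNumber A ρ := by
  refine le_iInf fun t => le_iInf fun _ht => le_iInf fun hcov => ?_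
  rcases t.eq_empty_or_nonempty with rfl | htne
  · obtain ⟨a, ha⟩ := h
    simpa using hcov ha
  · exact_mod_cast Nat.one_le_cast.2 htne.card_pos

lemma extN_le_coverNumber (A : Set X) (ρ : ℝ) : extN A ρ ≤ coverNumber A ρ :=
  le_iInf fun t => le_iInf fun _h1 => le_iInf fun h2 => extN_le_of_cover h2

lemma coverNumber_le_extN_half (A : Set X) (ρ : ℝ) :
    coverNumber A ρ ≤ extN A (ρ / 2) := by
  classical
  rcases A.eq_empty_or_nonempty with rfl | ⟨a₀, ha₀⟩
  · have h0 : coverNumber (∅ : Set X) ρ ≤ ((∅ : Finset X).card : ℝ≥0∞) :=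
      coverNumber_le_of_cover (by simp) (by simp)
    exact le_trans h0 (by simp)
  refine le_iInf₂ fun t ht => ?_
  set pick : X → X := fun x =>
    if h : (A ∩ closedBall x (ρ / 2)).Nonempty then h.choose else a₀ with hpick
  have hpickA : ∀ x, pick x ∈ A := by
    intro x
    rw [hpick]
    simp only []
    split
    · next h => exact h.choose_spec.1
    · exact ha₀
  refine le_trans (coverNumber_le_of_cover (t := t.image pick) ?_ ?_) ?_
  · intro y hy
    obtain ⟨x, _, rfl⟩ := Finset.mem_image.1 (by exact_mod_cast hy)
    exact hpickA x
  · intro a ha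
    obtain ⟨x, hx, hax⟩ := Set.mem_iUnion₂.1 (ht ha)
    have hne : (A ∩ closedBall x (ρ / 2)).Nonempty := ⟨a, ha, hax⟩
    have hb : pick x ∈ A ∩ closedBall x (ρ / 2) := by
      rw [hpick]; simp only [dif_pos hne]; exact hne.choose_spec
    refine Set.mem_iUnion₂.2 ⟨pick x, Finset.mem_image_of_mem pick hx, ?_⟩
    rw [mem_closedBall]
    calc dist a (pick x) ≤ dist a x + dist (pick x) x := dist_triangle_right _ _ _
      _ ≤ ρ / 2 + ρ / 2 := add_le_add hax hb.2
      _ = ρ := by ring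
  · exact_mod_cast Finset.card_image_le


lemma sim_linear {d : ℕ} {φ : EuclideanSpace ℝ (Fin d) → EuclideanSpace ℝ (Fin d)}
    (hφ0 : φ 0 = 0) (hφ : ∀ x y, dist (φ x) (φ y) = dist x y) :
    ∃ e : EuclideanSpace ℝ (Fin d) ≃ₗᵢ[ℝ] EuclideanSpace ℝ (Fin d), ∀ x, e x = φ x := by
  have hnd : ∀ x y, ‖φ x - φ y‖ = ‖x - y‖ := by
    intro x y; rw [← dist_eq_norm, ← dist_eq_norm]; exact hφ x y
  have hn : ∀ x, ‖φ x‖ = ‖x‖ := fun x => by simpa [hφ0] using hnd x 0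
  have hin : ∀ x y, inner ℝ (φ x) (φ y) = inner ℝ x y := by
    intro x y
    have h1 := norm_sub_sq_real (φ x) (φ y)
    have h2 := norm_sub_sq_real x y
    rw [hnd, hn, hn] at h1
    linarith
  have hnormsq : ∀ z : EuclideanSpace ℝ (Fin d), inner ℝ z z = 0 → z = 0 := by
    intro z hz
    exact inner_self_eq_zero.1 hz
  have hadd : ∀ x y, φ (x + y) = φ x + φ y := by
    intro x y
    have key : inner ℝ (φ (x + y) - (φ x + φ y)) (φ (x + y) - (φ x + φ y)) = 0 := by
      simp only [inner_sub_left, inner_sub_right, inner_add_left, inner_add_right, hin]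
      ring_nf
    have := hnormsq _ key
    rwa [sub_eq_zero] at this
  have hsmul : ∀ (c : ℝ) (x), φ (c • x) = c • φ x := by
    intro c x
    have key : inner ℝ (φ (c • x) - c • φ x) (φ (c • x) - c • φ x) = 0 := by
      simp only [inner_sub_left, inner_sub_right, real_inner_smul_left,
        real_inner_smul_right, hin]
      ring
    have := hnormsq _ key
    rwa [sub_eq_zero] at this
  let lm : EuclideanSpace ℝ (Fin d) →ₗ[ℝ] EuclideanSpace ℝ (Fin d) :=
    { toFun := φ, map_add' := hadd, map_smul' := hsmul }
  let li : EuclideanSpace ℝ (Fin d) →ₗᵢ[ℝ] EuclideanSpace ℝ (Fin d) := ⟨lm, hn⟩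
  exact ⟨li.toLinearIsometryEquiv rfl, fun x => rfl⟩

lemma sim_decomp {d : ℕ} {g : EuclideanSpace ℝ (Fin d) → EuclideanSpace ℝ (Fin d)} {r : ℝ}
    (hr : 0 < r) (hg : ∀ x y, dist (g x) (g y) = r * dist x y) :
    ∃ e : EuclideanSpace ℝ (Fin d) ≃ₗᵢ[ℝ] EuclideanSpace ℝ (Fin d),
      ∀ x, g x = g 0 + r • e x := by
  set φ : EuclideanSpace ℝ (Fin d) → EuclideanSpace ℝ (Fin d) :=
    fun x => r⁻¹ • (g x - g 0) with hφdef
  have hφ0 : φ 0 = 0 := by simp [hφdef]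
  have hφ : ∀ x y, dist (φ x) (φ y) = dist x y := by
    intro x y
    rw [dist_eq_norm]
    have : φ x - φ y = r⁻¹ • (g x - g y) := by
      rw [hφdef]; simp only [← smul_sub, sub_sub_sub_cancel_right]
    rw [this, norm_smul, Real.norm_eq_abs, abs_of_pos (inv_pos.2 hr), ← dist_eq_norm, hg]
    field_simp
  obtain ⟨e, he⟩ := sim_linear hφ0 hφ
  refine ⟨e, fun x => ?_⟩
  rw [he, hφdef]
  simp only [smul_inv_smul₀ hr.ne']
  abel

lemma sim_image_eq {d : ℕ} {g : EuclideanSpace ℝ (Fin d) → EuclideanSpace ℝ (Fin d)} {r : ℝ}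
    {e : EuclideanSpace ℝ (Fin d) ≃ₗᵢ[ℝ] EuclideanSpace ℝ (Fin d)}
    (he : ∀ x, g x = g 0 + r • e x) (A : Set (EuclideanSpace ℝ (Fin d))) :
    g '' A = (fun y => g 0 + y) '' ((fun y => r • y) '' (e '' A)) := by
  ext z
  simp only [Set.mem_image]
  constructor
  · rintro ⟨a, ha, rfl⟩
    exact ⟨r • e a, ⟨e a, ⟨a, ha, rfl⟩, rfl⟩, (he a).symm⟩
  · rintro ⟨_, ⟨_, ⟨a, ha, rfl⟩, rfl⟩, rfl⟩
    exact ⟨a, ha, he a⟩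

lemma euclidean_volume_image_eq {d : ℕ}
    {e : EuclideanSpace ℝ (Fin d) ≃ₗᵢ[ℝ] EuclideanSpace ℝ (Fin d)}
    (A : Set (EuclideanSpace ℝ (Fin d))) : volume (e '' A) = volume A := by
  have hmp : MeasurePreserving e volume volume := e.measurePreserving
  have me : MeasurableEquiv (EuclideanSpace ℝ (Fin d)) (EuclideanSpace ℝ (Fin d)) :=
    e.toHomeomorph.toMeasurableEquiv
  calc volume (e '' A) = (volume.map e.toHomeomorph.toMeasurableEquiv) (e '' A) := by
        rw [show (e.toHomeomorph.toMeasurableEquiv : _ → _) = (e : _ → _) from rfl] at *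
        rw [hmp.map_eq]
    _ = volume (e.toHomeomorph.toMeasurableEquiv ⁻¹' (e '' A)) :=
        MeasurableEquiv.map_apply _ _
    _ = volume A := by
        congr 1
        have : (e.toHomeomorph.toMeasurableEquiv ⁻¹' (e '' A)) = e ⁻¹' (e '' A) := rfl
        rw [this, Set.preimage_image_eq A e.injective]

lemma sim_vol {d : ℕ} {g : EuclideanSpace ℝ (Fin d) → EuclideanSpace ℝ (Fin d)} {r : ℝ}
    (hr : 0 < r) (hg : ∀ x y, dist (g x) (g y) = r * dist x y)
    (A : Set (EuclideanSpace ℝ (Fin d))) :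
    volume (g '' A) = ENNReal.ofReal (r ^ d) * volume A := by
  obtain ⟨e, he⟩ := sim_decomp hr hg
  rw [sim_image_eq he A]
  have h1 : ∀ s : Set (EuclideanSpace ℝ (Fin d)), volume ((fun y => g 0 + y) '' s) = volume s := by
    intro s
    rw [Set.image_add_left, measure_preimage_add]
  rw [h1]
  rw [Set.image_smul, Measure.addHaar_smul_of_nonneg volume hr.le, euclidean_volume_image_eq,
    finrank_euclideanSpace_fin]

lemma sim_isOpen {d : ℕ} {g : EuclideanSpace ℝ (Fin d) → EuclideanSpace ℝ (Fin d)} {r : ℝ}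
    (hr : 0 < r) (hg : ∀ x y, dist (g x) (g y) = r * dist x y)
    {A : Set (EuclideanSpace ℝ (Fin d))} (hA : IsOpen A) : IsOpen (g '' A) := by
  obtain ⟨e, he⟩ := sim_decomp hr hg
  rw [sim_image_eq he A]
  have h1 : IsOpen (e '' A) := e.toHomeomorph.isOpenMap A hA
  have h2 : IsOpen ((fun y => r • y) '' (e '' A)) := (isOpenMap_smul₀ hr.ne' : _) _ h1
  exact (Homeomorph.addLeft (g 0)).isOpenMap _ h2


variable {E : Type*} [MetricSpace E]

def wordSet (sys : NAIFS E) : ℕ → ℕ → Finset (List ℕ)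
  | _, 0 => {[]}
  | k, n + 1 => (sys.I (k + 1)).biUnion fun i =>
      (wordSet sys (k + 1) n).image fun w => i :: w

/-- Composition of the maps along a word. -/
def wmap (sys : NAIFS E) : List ℕ → E → E
  | [] => id
  | i :: w => sys.f i ∘ wmap sys w

@[simp] lemma wmap_nil (sys : NAIFS E) : wmap sys [] = id := rfl
@[simp] lemma wmap_cons (sys : NAIFS E) (i : ℕ) (w : List ℕ) :
    wmap sys (i :: w) = sys.f i ∘ wmap sys w := rfl

lemma mem_wordSet_succ {sys : NAIFS E} {k n : ℕ} {w : List ℕ} :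
    w ∈ wordSet sys k (n + 1) ↔
      ∃ i ∈ sys.I (k + 1), ∃ w' ∈ wordSet sys (k + 1) n, w = i :: w' := by
  simp [wordSet, Finset.mem_biUnion, Finset.mem_image, eq_comm]

lemma wordSet_nonempty (sys : NAIFS E) : ∀ n k, (wordSet sys k n).Nonempty := by
  intro n
  induction n with
  | zero => intro k; exact ⟨[], by simp [wordSet]⟩
  | succ n ih =>
    intro k
    obtain ⟨i, hi⟩ := sys.I_nonempty (k + 1) (by omega)
    obtain ⟨w, hw⟩ := ih (k + 1)
    exact ⟨i :: w, mem_wordSet_succ.2 ⟨i, hi, w, hw, rfl⟩⟩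

/-- The common contraction ratio of level-`n` words at level `k`. -/
def prodC (c : ℕ → ℝ) (k n : ℕ) : ℝ := ∏ j ∈ Finset.range n, c (k + 1 + j)

@[simp] lemma prodC_zero (c : ℕ → ℝ) (k : ℕ) : prodC c k 0 = 1 := by simp [prodC]

lemma prodC_succ (c : ℕ → ℝ) (k n : ℕ) :
    prodC c k (n + 1) = c (k + 1) * prodC c (k + 1) n := by
  rw [prodC, Finset.prod_range_succ', prodC]
  simp only [add_zero, mul_comm]
  congr 1
  apply Finset.prod_congr rfl
  intro j _
  congr 1
  omega

lemma prodC_succ' (c : ℕ → ℝ) (k n : ℕ) :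
    prodC c k (n + 1) = prodC c k n * c (k + 1 + n) := by
  rw [prodC, Finset.prod_range_succ, prodC]

section WithHyp

variable {sys : NAIFS E} {c : ℕ → ℝ}

lemma wmap_dist (hsim : ∀ i x y, dist (sys.f i x) (sys.f i y) = sys.σ i * dist x y)
    (hc : ∀ k, 1 ≤ k → ∀ i ∈ sys.I k, sys.σ i = c k) :
    ∀ n k, ∀ w ∈ wordSet sys k n, ∀ x y,
    dist (wmap sys w x) (wmap sys w y) = prodC c k n * dist x y := by
  intro n
  induction n with
  | zero =>
    intro k w hw x y
    simp [wordSet] at hw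
    subst hw
    simp
  | succ n ih =>
    intro k w hw x y
    obtain ⟨i, hi, w', hw', rfl⟩ := mem_wordSet_succ.1 hw
    rw [wmap_cons, Function.comp_apply, Function.comp_apply, hsim,
      ih (k + 1) w' hw', prodC_succ, hc (k + 1) (by omega) i hi, mul_assoc]

lemma f_injective (hsim : ∀ i x y, dist (sys.f i x) (sys.f i y) = sys.σ i * dist x y)
    (i : ℕ) : Function.Injective (sys.f i) := by
  intro x y hxy
  have := hsim i x y
  rw [hxy, dist_self] at this
  have h2 : dist x y = 0 := by
    have := (sys.σ_pos i)
    nlinarith [this, dist_nonneg (x := x) (y := y)]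
  exact dist_eq_zero.1 h2

end WithHyp

lemma pieces_eq {sys : NAIFS E} {F : ℕ → Set E}
    (hinv : ∀ k, F k = Sstep sys k (F (k + 1))) :
    ∀ n k, F k = ⋃ w ∈ wordSet sys k n, wmap sys w '' F (k + n) := by
  intro n
  induction n with
  | zero => intro k; simp [wordSet]
  | succ n ih =>
    intro k
    have hadd : k + 1 + n = k + (n + 1) := by omega
    have h2 : F (k + 1) = ⋃ w ∈ wordSet sys (k + 1) n, wmap sys w '' F (k + (n + 1)) := by
      rw [← hadd]; exact ih (k + 1)
    rw [hinv k, Sstep, h2]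
    ext z
    simp only [Set.mem_iUnion, Set.mem_image, exists_prop, mem_wordSet_succ]
    constructor
    · rintro ⟨i, hi, y, ⟨w', hw', a, ha, rfl⟩, rfl⟩
      exact ⟨i :: w', ⟨i, hi, w', hw', rfl⟩, a, ha, rfl⟩
    · rintro ⟨w, ⟨i, hi, w', hw', rfl⟩, a, ha, rfl⟩
      exact ⟨i, hi, wmap sys w' a, ⟨w', hw', a, ha, rfl⟩, rfl⟩

lemma wmap_image_subset_U {sys : NAIFS E} {U : ℕ → Set E}
    (hnest : ∀ k, Sstep sys k (U (k + 1)) ⊆ U k) :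
    ∀ n k, ∀ w ∈ wordSet sys k n, wmap sys w '' U (k + n) ⊆ U k := by
  intro n
  induction n with
  | zero =>
    intro k w hw
    simp [wordSet] at hw
    subst hw
    simp
  | succ n ih =>
    intro k w hw
    obtain ⟨i, hi, w', hw', rfl⟩ := mem_wordSet_succ.1 hw
    intro z hz
    obtain ⟨a, ha, rfl⟩ := hz
    have h1 : wmap sys w' a ∈ U (k + 1) := by
      apply ih (k + 1) w' hw'
      have : k + 1 + n = k + (n + 1) := by omega
      rw [this]
      exact Set.mem_image_of_mem _ ha
    have h2 : sys.f i (wmap sys w' a) ∈ Sstep sys k (U (k + 1)) := by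
      rw [Sstep]
      exact Set.mem_iUnion₂.2 ⟨i, hi, Set.mem_image_of_mem _ h1⟩
    exact hnest k h2

lemma wmap_image_disjoint {sys : NAIFS E} {U : ℕ → Set E}
    (hsim : ∀ i x y, dist (sys.f i x) (sys.f i y) = sys.σ i * dist x y)
    (hnest : ∀ k, Sstep sys k (U (k + 1)) ⊆ U k)
    (hdisj : ∀ k, 1 ≤ k → ∀ i ∈ sys.I k, ∀ j ∈ sys.I k, i ≠ j →
      sys.f i '' U k ∩ sys.f j '' U k = ∅) :
    ∀ n k, ∀ w ∈ wordSet sys k n, ∀ v ∈ wordSet sys k n, w ≠ v →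
      wmap sys w '' U (k + n) ∩ wmap sys v '' U (k + n) = ∅ := by
  intro n
  induction n with
  | zero =>
    intro k w hw v hv hne
    simp [wordSet] at hw hv
    exact absurd (hw.trans hv.symm) hne
  | succ n ih =>
    intro k w hw v hv hne
    obtain ⟨i, hi, w', hw', rfl⟩ := mem_wordSet_succ.1 hw
    obtain ⟨j, hj, v', hv', rfl⟩ := mem_wordSet_succ.1 hv
    have hadd : k + 1 + n = k + (n + 1) := by omega
    by_cases hij : i = j
    · subst hij
      have hne' : w' ≠ v' := fun h => hne (by rw [h])
      have hdisj' : wmap sys w' '' U (k + (n + 1)) ∩ wmap sys v' '' U (k + (n + 1)) = ∅ := by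
        rw [← hadd]
        exact ih (k + 1) w' hw' v' hv' hne'
      rw [Set.eq_empty_iff_forall_notMem]
      rintro z ⟨⟨a, ha, hza⟩, ⟨b, hb, hzb⟩⟩
      have : sys.f i (wmap sys w' a) = sys.f i (wmap sys v' b) := by
        simpa using hza.trans hzb.symm
      have heq := f_injective hsim i this
      have : wmap sys w' a ∈ wmap sys w' '' U (k + (n + 1)) ∩ wmap sys v' '' U (k + (n + 1)) :=
        ⟨Set.mem_image_of_mem _ ha, heq ▸ Set.mem_image_of_mem _ hb⟩
      rw [hdisj'] at this
      exact this
    · have hsubw : wmap sys (i :: w') '' U (k + (n + 1)) ⊆ sys.f i '' U (k + 1) := by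
        rintro z ⟨a, ha, rfl⟩
        simp only [wmap_cons, Function.comp_apply]
        refine Set.mem_image_of_mem _ ?_
        apply wmap_image_subset_U hnest n (k + 1) w' hw'
        rw [hadd]
        exact Set.mem_image_of_mem _ ha
      have hsubv : wmap sys (j :: v') '' U (k + (n + 1)) ⊆ sys.f j '' U (k + 1) := by
        rintro z ⟨a, ha, rfl⟩
        simp only [wmap_cons, Function.comp_apply]
        refine Set.mem_image_of_mem _ ?_
        apply wmap_image_subset_U hnest n (k + 1) v' hv'
        rw [hadd]
        exact Set.mem_image_of_mem _ ha
      have := hdisj (k + 1) (by omega) i hi j hj hij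
      rw [Set.eq_empty_iff_forall_notMem]
      rintro z ⟨hz1, hz2⟩
      have : z ∈ sys.f i '' U (k + 1) ∩ sys.f j '' U (k + 1) := ⟨hsubw hz1, hsubv hz2⟩
      rw [hdisj (k + 1) (by omega) i hi j hj hij] at this
      exact this

lemma wmap_image_subset_SiterN {sys : NAIFS E} :
    ∀ n k (B : Set E), ∀ w ∈ wordSet sys k n, wmap sys w '' B ⊆ SiterN sys k n B := by
  intro n
  induction n with
  | zero =>
    intro k B w hw
    simp [wordSet] at hw
    subst hw
    simp [SiterN]
  | succ n ih =>
    intro k B w hw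
    obtain ⟨i, hi, w', hw', rfl⟩ := mem_wordSet_succ.1 hw
    rintro z ⟨a, ha, rfl⟩
    simp only [wmap_cons, Function.comp_apply]
    show sys.f i (wmap sys w' a) ∈ SiterN sys k (n + 1) B
    have h1 : wmap sys w' a ∈ SiterN sys (k + 1) n B :=
      ih (k + 1) B w' hw' (Set.mem_image_of_mem _ ha)
    exact Set.mem_iUnion₂.2 ⟨i, hi, Set.mem_image_of_mem _ h1⟩

lemma SiterN_nonempty {sys : NAIFS E} {B : Set E} (hB : B.Nonempty) :
    ∀ n k, (SiterN sys k n B).Nonempty := by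
  intro n
  induction n with
  | zero => intro k; exact hB
  | succ n ih =>
    intro k
    obtain ⟨i, hi⟩ := sys.I_nonempty (k + 1) (by omega)
    obtain ⟨x, hx⟩ := ih (k + 1)
    exact ⟨sys.f i x, Set.mem_iUnion₂.2 ⟨i, hi, Set.mem_image_of_mem _ hx⟩⟩

end EquiAux

set_option maxHeartbeats 1000000 in
/-- If the pullback attractor of a non-autonomous IFS of
similarities satisfies the generalised Moran open-set condition, the ratios
coincide within each step (`σ_i = c_k` for `i ∈ I_k`), and
`inf{σ_i} = σ* > 0`, then each `F^k` is equi-homogeneous. -/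
theorem attractor_equiHomogeneous_of_equal_ratios_of_inf_pos {d : ℕ}
    (sys : NAIFS (EuclideanSpace ℝ (Fin d)))
    (hsim : ∀ i x y, dist (sys.f i x) (sys.f i y) = sys.σ i * dist x y)
    (U : ℕ → Set (EuclideanSpace ℝ (Fin d))) (ε₀ : ℝ)
    (hosc : GenMoranOSC sys U ε₀)
    (c : ℕ → ℝ) (hc : ∀ k, 1 ≤ k → ∀ i ∈ sys.I k, sys.σ i = c k)
    (σstar : ℝ) (hσstar : σstar = sInf (Set.range sys.σ)) (hσpos : 0 < σstar)
    (F : ℕ → Set (EuclideanSpace ℝ (Fin d)))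
    (hF : IsPullbackAttractor sys F) :
    ∀ k, EquiHomogeneous (F k) := by
  classical
  obtain ⟨hcomp, hbdd, hinv, hattr⟩ := hF
  obtain ⟨hUne, hUopen, hUbdd, hnest, hdisj, hε₀pos, hεvol⟩ := hosc
  -- every F m is nonempty
  have hFne : ∀ m, (F m).Nonempty := by
    intro m
    by_contra hem
    rw [Set.not_nonempty_iff_eq_empty] at hem
    have htend := hattr {0} isBounded_singleton m
    have hsemi : ∀ l : ℕ, semidist (SiterN sys m (l - m) ({0} : Set (EuclideanSpace ℝ (Fin d)))) (F m) = ⊤ := by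
      intro l
      obtain ⟨x, hx⟩ := SiterN_nonempty (B := ({0} : Set (EuclideanSpace ℝ (Fin d))))
        (Set.singleton_nonempty 0) (l - m) m
      refine top_unique ?_
      have h1 : EMetric.infEdist x (F m) = ⊤ := by
        show Metric.infEDist x (F m) = ⊤
        rw [hem, EMetric.infEdist_empty]
      exact h1 ▸ le_iSup₂ (f := fun x _ => EMetric.infEdist x (F m)) x hx
    have hev := (htend.eventually (Iio_mem_nhds (zero_lt_one (α := ℝ≥0∞)))).exists
    obtain ⟨l, hl⟩ := hev
    rw [hsemi l] at hl
    simp at hl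
  intro k
  intro δ₀ hδ₀
  rcases Nat.eq_zero_or_pos d with hd0 | hdpos
  · -- degenerate case : the space is a single point
    subst hd0
    have hsub : ∀ x y : EuclideanSpace ℝ (Fin 0), x = y := fun x y => PiLp.ext fun i => Fin.elim0 i
    refine ⟨1, 1, 1, le_refl 1, one_pos, one_pos, ?_⟩
    intro δ ρ hρ hρδ hδ
    have hδpos : 0 < δ := hρ.trans hρδ
    rw [ENNReal.ofReal_one, one_mul]
    have hLHS : (⨆ x ∈ F k, coverNumber (closedBall x δ ∩ F k) ρ) ≤ 1 := by
      refine iSup₂_le fun x hx => ?_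
      have h1 : coverNumber (closedBall x δ ∩ F k) ρ ≤ (({x} : Finset _).card : ℝ≥0∞) := by
        refine coverNumber_le_of_cover ?_ ?_
        · intro y hy
          simp only [Finset.coe_singleton, Set.mem_singleton_iff] at hy
          subst hy
          exact ⟨mem_closedBall_self hδpos.le, hx⟩
        · intro y _hy
          refine Set.mem_iUnion₂.2 ⟨x, Finset.mem_singleton_self x, ?_⟩
          rw [mem_closedBall, hsub y x, dist_self]
          exact hρ.le
      simpa using h1
    refine hLHS.trans ?_
    refine le_iInf₂ fun x hx => ?_
    refine one_le_coverNumber ⟨x, ?_, hx⟩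
    rw [mem_closedBall, dist_self]
    positivity
  -- main case : d ≥ 1
  obtain ⟨y₀, hy₀⟩ := hFne k
  -- a common bounded closed ball
  obtain ⟨R₀, hR₀⟩ := (hbdd.union hUbdd).subset_closedBall y₀
  set R₂ : ℝ := max R₀ 1 with hR₂def
  have hR₂pos : 0 < R₂ := lt_of_lt_of_le one_pos (le_max_right _ _)
  have hball : (⋃ m, F m) ∪ ⋃ m, U m ⊆ closedBall y₀ R₂ :=
    hR₀.trans (closedBall_subset_closedBall (le_max_left _ _))
  have hsubF : ∀ m, F m ⊆ closedBall y₀ R₂ := fun m =>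
    (Set.subset_iUnion F m).trans (Set.subset_union_left.trans hball)
  have hsubU : ∀ m, U m ⊆ closedBall y₀ R₂ := fun m =>
    (Set.subset_iUnion U m).trans (Set.subset_union_right.trans hball)
  -- facts about ratios
  have hσle : ∀ i, σstar ≤ sys.σ i := by
    intro i
    rw [hσstar]
    exact csInf_le ⟨0, by rintro _ ⟨j, rfl⟩; exact (sys.σ_pos j).le⟩ ⟨i, rfl⟩
  have hcfact : ∀ j, 1 ≤ j → 0 < c j ∧ c j < 1 ∧ σstar ≤ c j := by
    intro j hj
    obtain ⟨i, hi⟩ := sys.I_nonempty j hj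
    have hci := hc j hj i hi
    exact ⟨hci ▸ sys.σ_pos i, hci ▸ sys.σ_lt_one i, hci ▸ hσle i⟩
  set r : ℕ → ℝ := fun n => prodC c k n with hrdef
  have hr0 : r 0 = 1 := prodC_zero c k
  have hrpos : ∀ n, 0 < r n := by
    intro n
    induction n with
    | zero => rw [hr0]; exact one_pos
    | succ n ih =>
      have := (hcfact (k + 1 + n) (by omega)).1
      have h2 : r (n + 1) = r n * c (k + 1 + n) := prodC_succ' c k n
      rw [h2]; positivity
  have hrsucc : ∀ n, r (n + 1) = r n * c (k + 1 + n) := fun n => prodC_succ' c k n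
  have hrle : ∀ n, r (n + 1) ≤ r n := by
    intro n
    rw [hrsucc n]
    nlinarith [(hcfact (k + 1 + n) (by omega)).2.1, hrpos n]
  have hrlow : ∀ n, σstar * r n ≤ r (n + 1) := by
    intro n
    rw [hrsucc n, mul_comm (r n)]
    exact mul_le_mul_of_nonneg_right (hcfact (k + 1 + n) (by omega)).2.2 (hrpos n).le
  have hwdist : ∀ n, ∀ w ∈ wordSet sys k n, ∀ x y,
      dist (wmap sys w x) (wmap sys w y) = r n * dist x y := by
    intro n w hw x y
    exact wmap_dist hsim hc n k w hw x y
  -- the ratios tend to zero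
  have hrzero : ∀ ε : ℝ, 0 < ε → ∃ n, r n ≤ ε := by
    intro ε hε
    by_contra hno
    push_neg at hno
    set i0 : Fin d := ⟨0, hdpos⟩
    set T : ℝ := (2 * R₂ + 1) / ε with hTdef
    have hTpos : 0 < T := by positivity
    set z : EuclideanSpace ℝ (Fin d) := y₀ + EuclideanSpace.single i0 (R₂ + T) with hzdef
    have hzy₀ : dist z y₀ = R₂ + T := by
      rw [hzdef, dist_eq_norm, add_sub_cancel_left, EuclideanSpace.norm_single,
        Real.norm_eq_abs, abs_of_pos (by positivity)]
    have hzfar : ∀ p, p ∈ closedBall y₀ R₂ → T ≤ dist z p := by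
      intro p hp
      rw [mem_closedBall] at hp
      have h1 := dist_triangle z p y₀
      have h2 : dist p y₀ ≤ R₂ := hp
      linarith [hzy₀ ▸ h1]
    have htend := hattr {z} isBounded_singleton k
    obtain ⟨l, hl⟩ := (htend.eventually (Iio_mem_nhds (zero_lt_one (α := ℝ≥0∞)))).exists
    set n := l - k with hndef
    obtain ⟨w, hw⟩ := wordSet_nonempty sys n k
    obtain ⟨p, hp⟩ := hFne (k + n)
    have hmem : wmap sys w z ∈ SiterN sys k n ({z} : Set (EuclideanSpace ℝ (Fin d))) :=
      wmap_image_subset_SiterN n k {z} w hw (Set.mem_image_of_mem _ rfl)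
    have hfp : wmap sys w p ∈ F k := by
      rw [pieces_eq hinv n k]
      exact Set.mem_iUnion₂.2 ⟨w, hw, Set.mem_image_of_mem _ hp⟩
    have hlower : (1 : ℝ≥0∞) ≤ EMetric.infEdist (wmap sys w z) (F k) := by
      show (1 : ℝ≥0∞) ≤ Metric.infEDist (wmap sys w z) (F k)
      rw [EMetric.le_infEdist]
      intro q hq
      have hd1 : dist (wmap sys w z) (wmap sys w p) = r n * dist z p := hwdist n w hw z p
      have hzp : T ≤ dist z p := hzfar p (hsubF (k + n) hp)
      have h5 : dist (wmap sys w p) q ≤ 2 * R₂ := by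
        have hq2 : dist q y₀ ≤ R₂ := hsubF k hq
        have hp2 : dist (wmap sys w p) y₀ ≤ R₂ := hsubF k hfp
        have := dist_triangle (wmap sys w p) y₀ q
        rw [dist_comm y₀ q] at this
        linarith
      have h6 : ε * T ≤ dist (wmap sys w z) (wmap sys w p) := by
        rw [hd1]
        have := (hno n).le
        nlinarith [hrpos n, hTpos, hε]
      have hεT : ε * T = 2 * R₂ + 1 := by
        rw [hTdef]; field_simp
      have h3 : (1 : ℝ) ≤ dist (wmap sys w z) q := by
        have h4 := dist_triangle (wmap sys w z) q (wmap sys w p)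
        rw [dist_comm q (wmap sys w p)] at h4
        linarith
      rw [edist_dist]
      exact (ENNReal.one_le_ofReal).2 h3
    have hge : (1 : ℝ≥0∞) ≤ semidist (SiterN sys k n ({z} : Set (EuclideanSpace ℝ (Fin d)))) (F k) :=
      le_trans hlower (le_iSup₂ (f := fun x _ => EMetric.infEdist x (F k)) (wmap sys w z) hmem)
    exact absurd hl (not_lt.2 hge)
  -- scale selection
  set β : ℝ := min σstar (1 / δ₀) with hβdef
  have hβpos : 0 < β := lt_min hσpos (by positivity)
  have hexn : ∀ δ : ℝ, 0 < δ → δ ≤ δ₀ → ∃ n, β * δ ≤ r n ∧ r n ≤ δ := by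
    intro δ hδ hδle
    have hex : ∃ n, r n ≤ δ := hrzero δ hδ
    set N := Nat.find hex with hNdef
    have hNspec : r N ≤ δ := Nat.find_spec hex
    refine ⟨N, ?_, hNspec⟩
    rcases Nat.eq_zero_or_pos N with h0 | hNpos
    · rw [h0, hr0]
      have h1 : β ≤ 1 / δ₀ := min_le_right _ _
      have : β * δ ≤ (1 / δ₀) * δ₀ := by
        apply mul_le_mul h1 hδle hδ.le (by positivity)
      rw [one_div_mul_cancel hδ₀.ne'] at this
      exact this
    · have hmlt : ¬ (r (N - 1) ≤ δ) :=
        Nat.find_min hex (show N - 1 < Nat.find hex by rw [← hNdef]; omega)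
      push_neg at hmlt
      have h1 : σstar * r (N - 1) ≤ r ((N - 1) + 1) := hrlow (N - 1)
      have hsucc : (N - 1) + 1 = N := by omega
      rw [hsucc] at h1
      have h2 : β ≤ σstar := min_le_left _ _
      nlinarith [hrpos (N - 1)]
  -- volume constants
  set Vb : ℝ≥0∞ := volume (ball (0 : EuclideanSpace ℝ (Fin d)) 1) with hVbdef
  have hVb_top : Vb ≠ ⊤ := measure_ball_lt_top.ne
  set K : ℝ := ((2 * R₂ + 1) / β) ^ d / ε₀ with hKdef
  have hKnn : 0 ≤ K := by positivity
  set M : ℝ := max 1 (K * Vb.toReal) with hMdef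
  set c₁ : ℝ := 2 * R₂ + 1 with hc₁def
  have hc₁pos : 0 < c₁ := by positivity
  refine ⟨M, c₁, 1 / 4, le_max_left _ _, hc₁pos, by norm_num, ?_⟩
  intro δ ρ hρ hρδ hδδ₀
  have hδpos : 0 < δ := hρ.trans hρδ
  obtain ⟨n, hrl, hru⟩ := hexn δ hδpos hδδ₀
  have hrnpos : 0 < r n := hrpos n
  set F' : Set (EuclideanSpace ℝ (Fin d)) := F (k + n) with hF'def
  set s : ℝ := ρ / (2 * r n) with hsdef
  set G : List ℕ → Set (EuclideanSpace ℝ (Fin d)) := fun w => wmap sys w '' F' with hGdef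
  have hpieces : F k = ⋃ w ∈ wordSet sys k n, G w := pieces_eq hinv n k
  have hGsubF : ∀ w ∈ wordSet sys k n, G w ⊆ F k := by
    intro w hw x hx
    rw [hpieces]
    exact Set.mem_iUnion₂.2 ⟨w, hw, hx⟩
  have sρ2 : r n * s = ρ / 2 := by
    rw [hsdef]; field_simp
  have sc₂ : 2 * (1 / 4 * ρ) / r n = s := by
    rw [hsdef]; field_simp; ring
  -- the counting bound
  have hcount : ∀ x : EuclideanSpace ℝ (Fin d), ∀ P : Finset (List ℕ), P ⊆ wordSet sys k n →
      (∀ w ∈ P, (G w ∩ closedBall x δ).Nonempty) → (P.card : ℝ≥0∞) ≤ ENNReal.ofReal M := by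
    intro x P hPsub hPmeet
    have hωdist : ∀ w ∈ P, ∀ a b, dist (wmap sys w a) (wmap sys w b) = r n * dist a b :=
      fun w hw => hwdist n w (hPsub hw)
    have hUvol : ∀ w ∈ P,
        ENNReal.ofReal ((β * δ) ^ d * ε₀) ≤ volume (wmap sys w '' U (k + n)) := by
      intro w hw
      rw [sim_vol hrnpos (hωdist w hw) (U (k + n))]
      calc ENNReal.ofReal ((β * δ) ^ d * ε₀)
          = ENNReal.ofReal ((β * δ) ^ d) * ENNReal.ofReal ε₀ :=
            ENNReal.ofReal_mul (by positivity)
        _ ≤ ENNReal.ofReal (r n ^ d) * volume (U (k + n)) := by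
            refine mul_le_mul' (ENNReal.ofReal_le_ofReal ?_) (hεvol (k + n))
            exact pow_le_pow_left₀ (by positivity) hrl d
    have hUball : ∀ w ∈ P, wmap sys w '' U (k + n) ⊆ closedBall x ((2 * R₂ + 1) * δ) := by
      intro w hw
      rintro _ ⟨u, hu, rfl⟩
      obtain ⟨gq, hgq, hgqB⟩ := hPmeet w hw
      obtain ⟨q, hq, rfl⟩ := hgq
      rw [mem_closedBall]
      have h1 : dist (wmap sys w u) (wmap sys w q) = r n * dist u q := hωdist w hw u q
      have h2 : dist u q ≤ 2 * R₂ := by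
        have hu2 : dist u y₀ ≤ R₂ := hsubU (k + n) hu
        have hq2 : dist q y₀ ≤ R₂ := hsubF (k + n) hq
        have := dist_triangle u y₀ q
        rw [dist_comm y₀ q] at this
        linarith
      have h3 : dist (wmap sys w q) x ≤ δ := hgqB
      have h4 := dist_triangle (wmap sys w u) (wmap sys w q) x
      have h5 : r n * dist u q ≤ δ * (2 * R₂) := by
        have := mul_le_mul hru h2 dist_nonneg hδpos.le
        nlinarith [hrnpos, dist_nonneg (x := u) (y := q)]
      nlinarith
    have hdisjP : (P : Set (List ℕ)).PairwiseDisjoint (fun w => wmap sys w '' U (k + n)) := by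
      intro w hw v hv hne
      rw [Function.onFun, Set.disjoint_iff_inter_eq_empty]
      exact wmap_image_disjoint hsim hnest hdisj n k w (hPsub hw) v (hPsub hv) hne
    have hmeasP : ∀ w ∈ P, MeasurableSet (wmap sys w '' U (k + n)) := fun w hw =>
      (sim_isOpen hrnpos (hωdist w hw) (hUopen (k + n))).measurableSet
    have hsum : ∑ w ∈ P, volume (wmap sys w '' U (k + n)) =
        volume (⋃ w ∈ P, wmap sys w '' U (k + n)) :=
      (measure_biUnion_finset hdisjP hmeasP).symm
    have hchain : (P.card : ℝ≥0∞) * ENNReal.ofReal ((β * δ) ^ d * ε₀) ≤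
        ENNReal.ofReal (((2 * R₂ + 1) * δ) ^ d) * Vb := by
      calc (P.card : ℝ≥0∞) * ENNReal.ofReal ((β * δ) ^ d * ε₀)
          = ∑ _w ∈ P, ENNReal.ofReal ((β * δ) ^ d * ε₀) := by
            rw [Finset.sum_const, nsmul_eq_mul]
        _ ≤ ∑ w ∈ P, volume (wmap sys w '' U (k + n)) :=
            Finset.sum_le_sum hUvol
        _ = volume (⋃ w ∈ P, wmap sys w '' U (k + n)) := hsum
        _ ≤ volume (closedBall x ((2 * R₂ + 1) * δ)) := by
            refine measure_mono ?_
            exact Set.iUnion₂_subset hUball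
        _ = ENNReal.ofReal (((2 * R₂ + 1) * δ) ^ d) * Vb := by
            rw [Measure.addHaar_closedBall volume x (by positivity),
              finrank_euclideanSpace_fin]
    have hKid : ((2 * R₂ + 1) * δ) ^ d = K * ((β * δ) ^ d * ε₀) := by
      rw [hKdef, div_pow, mul_pow, mul_pow]
      field_simp
      rw [hc₁def]
    have hcancel : (P.card : ℝ≥0∞) ≤ ENNReal.ofReal K * Vb := by
      have ha0 : ENNReal.ofReal ((β * δ) ^ d * ε₀) ≠ 0 := by
        rw [Ne, ENNReal.ofReal_eq_zero, not_le]
        positivity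
      have hatop : ENNReal.ofReal ((β * δ) ^ d * ε₀) ≠ ⊤ := ENNReal.ofReal_ne_top
      have hre : ENNReal.ofReal (((2 * R₂ + 1) * δ) ^ d) * Vb
          = (ENNReal.ofReal K * Vb) * ENNReal.ofReal ((β * δ) ^ d * ε₀) := by
        rw [hKid, ENNReal.ofReal_mul hKnn, mul_right_comm]
      rw [hre] at hchain
      exact (ENNReal.mul_le_mul_iff_left ha0 hatop).1 hchain
    refine hcancel.trans ?_
    calc ENNReal.ofReal K * Vb = ENNReal.ofReal K * ENNReal.ofReal Vb.toReal := by
          rw [ENNReal.ofReal_toReal hVb_top]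
      _ = ENNReal.ofReal (K * Vb.toReal) := (ENNReal.ofReal_mul hKnn).symm
      _ ≤ ENNReal.ofReal M := ENNReal.ofReal_le_ofReal (le_max_right _ _)
  -- lower bound for the infimum
  have hcenter : extN F' s ≤ ⨅ y ∈ F k, coverNumber (closedBall y (c₁ * δ) ∩ F k) (1 / 4 * ρ) := by
    refine le_iInf₂ fun y hy => ?_
    have hyF : y ∈ ⋃ w ∈ wordSet sys k n, G w := hpieces ▸ hy
    obtain ⟨w, hw, hyG⟩ := Set.mem_iUnion₂.1 hyF
    have h1 : extN F' s ≤ extN (G w) (1 / 4 * ρ) := by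
      rw [← sc₂]
      exact le_extN_image hrnpos (hwdist n w hw) F' (1 / 4 * ρ)
    have h2 : G w ⊆ closedBall y (c₁ * δ) ∩ F k := by
      intro zz hzz
      refine ⟨?_, hGsubF w hw hzz⟩
      obtain ⟨a, ha, rfl⟩ := hzz
      obtain ⟨b, hb, rfl⟩ := hyG
      rw [mem_closedBall]
      have hd1 : dist (wmap sys w a) (wmap sys w b) = r n * dist a b := hwdist n w hw a b
      have h3 : dist a b ≤ 2 * R₂ := by
        have ha2 : dist a y₀ ≤ R₂ := hsubF (k + n) ha
        have hb2 : dist b y₀ ≤ R₂ := hsubF (k + n) hb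
        have := dist_triangle a y₀ b
        rw [dist_comm y₀ b] at this
        linarith
      have h4 : r n * dist a b ≤ δ * (2 * R₂) := by
        have := mul_le_mul hru h3 dist_nonneg hδpos.le
        nlinarith [hrnpos, dist_nonneg (x := a) (y := b)]
      rw [hd1, hc₁def]
      nlinarith [hR₂pos]
    exact h1.trans ((extN_mono h2).trans (extN_le_coverNumber _ _))
  -- conclusion
  refine iSup₂_le fun x hx => ?_
  set P : Finset (List ℕ) :=
    (wordSet sys k n).filter (fun w => (G w ∩ closedBall x δ).Nonempty) with hPdef
  have hcover : closedBall x δ ∩ F k ⊆ ⋃ w ∈ P, G w := by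
    rintro a ⟨haB, haF⟩
    obtain ⟨w, hw, haw⟩ := Set.mem_iUnion₂.1 (hpieces ▸ haF)
    exact Set.mem_iUnion₂.2 ⟨w, Finset.mem_filter.2 ⟨hw, ⟨a, haw, haB⟩⟩, haw⟩
  have hstep3 : extN (⋃ w ∈ P, G w) (ρ / 2) ≤ (P.card : ℝ≥0∞) * extN F' s := by
    refine extN_biUnion_le fun w hw => ?_
    rw [← sρ2]
    exact extN_image_le hrnpos.le (hwdist n w (Finset.mem_filter.1 hw).1) F' s
  have hstep4 : (P.card : ℝ≥0∞) ≤ ENNReal.ofReal M :=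
    hcount x P (Finset.filter_subset _ _) (fun w hw => (Finset.mem_filter.1 hw).2)
  calc coverNumber (closedBall x δ ∩ F k) ρ
      ≤ extN (closedBall x δ ∩ F k) (ρ / 2) := coverNumber_le_extN_half _ _
    _ ≤ extN (⋃ w ∈ P, G w) (ρ / 2) := extN_mono hcover
    _ ≤ (P.card : ℝ≥0∞) * extN F' s := hstep3
    _ ≤ ENNReal.ofReal M * extN F' s := mul_le_mul_left hstep4 _
    _ ≤ ENNReal.ofReal M * ⨅ y ∈ F k, coverNumber (closedBall y (c₁ * δ) ∩ F k) (1 / 4 * ρ) :=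
        mul_le_mul_right hcenter _
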